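/- arXiv:math/0010280 — 4 statements merged into one kernel-verified Lean document; each statement's English description precedes it below -/
import Mathlib

section
/- Let Γ be a finitely generated group and K a subgroup of Γ of finite index d (so that K is also finitely generated). Then β(Γ) ≥ β(K)^{1/(2d−1)}, where β(G) denotes the infimum of the growth rates β(S,G) over all finite generating sets S of G. -/
open Subgroup

/-- The ball of radius `n`: elements expressible as a product of at most `n`
elements of `S ∪ S⁻¹`. -/
def ball {G : Type*} [Group G] (S : Finset G) (n : ℕ) : Set G :=
  {g | ∃ l : List G, l.length ≤ n ∧ (∀ x ∈ l, x ∈ S ∨ x⁻¹ ∈ S) ∧ l.prod = g}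

/-- The growth rate `β(S,Γ) = inf_{n ≥ 1} β_n(S,Γ)^(1/n)`. -/
noncomputable def growthRate {G : Type*} [Group G] (S : Finset G) : ℝ :=
  ⨅ n : ℕ, (Nat.card (ball S (n + 1)) : ℝ) ^ (((n : ℝ) + 1)⁻¹)

/-- Word length with respect to `S`. -/
noncomputable def wordLength {G : Type*} [Group G] (S : Finset G) (g : G) : ℕ :=
  sInf {n : ℕ | g ∈ ball S n}

/-- `a` and `b` generate a free semigroup. -/
def GeneratesFreeSemigroup {G : Type*} [Group G] (a b : G) : Prop :=
  Function.Injective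
    (FreeSemigroup.lift (fun x : Bool => if x then a else b) : FreeSemigroup Bool →ₙ* G)

/-- `β(G) = inf_S β(S,G)` over all finite generating sets. -/
noncomputable def groupGrowthRate (G : Type*) [Group G] : ℝ :=
  sInf {r : ℝ | ∃ S : Finset G, Subgroup.closure (S : Set G) = ⊤ ∧ r = growthRate S}

/-- Uniform exponential growth: `inf_S β(S,G) > 1`. -/
def UniformExponentialGrowth (G : Type*) [Group G] : Prop :=
  1 < groupGrowthRate G

/-- Exponential growth: `β(S,G) > 1` for some finite generating set. -/
def ExponentialGrowth (G : Type*) [Group G] : Prop :=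
  ∃ S : Finset G, Subgroup.closure (S : Set G) = ⊤ ∧ 1 < growthRate S

/-- Polynomial growth. -/
def PolynomialGrowth (G : Type*) [Group G] : Prop :=
  ∃ (S : Finset G) (C : ℝ) (d : ℕ), Subgroup.closure (S : Set G) = ⊤ ∧
    ∀ n : ℕ, 1 ≤ n → (Nat.card (ball S n) : ℝ) ≤ C * (n : ℝ) ^ d

section Aux

variable {G : Type*} [Group G] (S : Finset G)

theorem GFI.one_mem_ball (n : ℕ) : (1 : G) ∈ ball S n := ⟨[], by simp⟩

theorem GFI.ball_mono {m n : ℕ} (h : m ≤ n) : ball S m ⊆ ball S n := by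
  rintro g ⟨l, hl, he, hp⟩; exact ⟨l, hl.trans h, he, hp⟩

theorem GFI.mul_mem_ball {a b : G} {m n : ℕ} (ha : a ∈ ball S m) (hb : b ∈ ball S n) :
    a * b ∈ ball S (m + n) := by
  obtain ⟨l, hl, he, hp⟩ := ha
  obtain ⟨l', hl', he', hp'⟩ := hb
  refine ⟨l ++ l', by simpa using Nat.add_le_add hl hl', ?_, by simp [hp, hp']⟩
  intro x hx
  rcases List.mem_append.1 hx with h | h
  · exact he x h
  · exact he' x h

theorem GFI.inv_mem_ball {a : G} {n : ℕ} (ha : a ∈ ball S n) : a⁻¹ ∈ ball S n := by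
  obtain ⟨l, hl, he, hp⟩ := ha
  refine ⟨(l.map Inv.inv).reverse, by simpa using hl, ?_, ?_⟩
  · intro x hx
    simp only [List.mem_reverse, List.mem_map] at hx
    obtain ⟨y, hy, rfl⟩ := hx
    rcases he y hy with h | h
    · exact Or.inr (by simpa using h)
    · exact Or.inl h
  · rw [← hp, List.prod_inv_reverse]

theorem GFI.ball_finite (n : ℕ) : (ball S n).Finite := by
  induction n with
  | zero =>
    refine Set.Finite.subset (Set.finite_singleton 1) ?_
    rintro g ⟨l, hl, -, hp⟩
    simp only [Nat.le_zero, List.length_eq_zero_iff] at hl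
    simp [hl] at hp
    simp [← hp]
  | succ n ih =>
    refine Set.Finite.subset
      (Set.Finite.mul ((S.finite_toSet.union S.finite_toSet.inv).insert 1) ih) ?_
    rintro g ⟨l, hl, he, hp⟩
    match l with
    | [] => exact ⟨1, by simp, 1, GFI.one_mem_ball S n, by simp at hp; simp [← hp]⟩
    | x :: l' =>
      refine ⟨x, ?_, l'.prod,
        ⟨l', by simpa using hl, fun y hy => he y (List.mem_cons_of_mem _ hy), rfl⟩,
        by simp [← hp]⟩
      rcases he x (List.mem_cons_self) with h | h
      · exact Set.mem_insert_iff.2 (Or.inr (Set.mem_union_left _ h))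
      · exact Set.mem_insert_iff.2 (Or.inr (Set.mem_union_right _ (by simpa using h)))

theorem GFI.card_ball_pos (n : ℕ) : 0 < Nat.card (ball S n) := by
  rw [Nat.card_coe_set_eq]
  exact (Set.ncard_pos (GFI.ball_finite S n)).2 ⟨1, GFI.one_mem_ball S n⟩

noncomputable def GFI.ballSplit {m n : ℕ} (g : ball S (m + n)) : ball S m × ball S n := by
  have h := g.2
  refine ⟨⟨(h.choose.take m).prod, h.choose.take m, ?_, ?_, rfl⟩,
          ⟨(h.choose.drop m).prod, h.choose.drop m, ?_, ?_, rfl⟩⟩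
  · rw [List.length_take]; exact min_le_left _ _
  · exact fun x hx => h.choose_spec.2.1 x (List.mem_of_mem_take hx)
  · have := h.choose_spec.1
    rw [List.length_drop]
    omega
  · exact fun x hx => h.choose_spec.2.1 x (List.mem_of_mem_drop hx)

theorem GFI.ballSplit_spec {m n : ℕ} (g : ball S (m + n)) :
    ((GFI.ballSplit S g).1 : G) * ((GFI.ballSplit S g).2 : G) = g := by
  have h := g.2
  show (h.choose.take m).prod * (h.choose.drop m).prod = _
  rw [← List.prod_append, List.take_append_drop, h.choose_spec.2.2]

theorem GFI.card_ball_submul (m n : ℕ) :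
    Nat.card (ball S (m + n)) ≤ Nat.card (ball S m) * Nat.card (ball S n) := by
  haveI := (GFI.ball_finite S m).to_subtype
  haveI := (GFI.ball_finite S n).to_subtype
  rw [← Nat.card_prod]
  refine Nat.card_le_card_of_injective (GFI.ballSplit S) ?_
  intro g g' h
  have := GFI.ballSplit_spec S g
  rw [h, GFI.ballSplit_spec S g'] at this
  exact Subtype.ext this.symm

theorem GFI.card_ball_mul_le (p n : ℕ) :
    Nat.card (ball S (p * n)) ≤ Nat.card (ball S n) ^ p := by
  induction p with
  | zero =>
    simp only [Nat.zero_mul, pow_zero]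
    have : ball S 0 = {1} := by
      apply Set.eq_singleton_iff_unique_mem.2
      refine ⟨GFI.one_mem_ball S 0, ?_⟩
      rintro g ⟨l, hl, -, hp⟩
      simp only [Nat.le_zero, List.length_eq_zero_iff] at hl
      simp [hl] at hp; simp [← hp]
    rw [this]; simp
  | succ p ih =>
    calc Nat.card (ball S ((p+1) * n)) ≤ Nat.card (ball S (p*n)) * Nat.card (ball S n) := by
          rw [show (p+1)*n = p*n + n by ring]; exact GFI.card_ball_submul S _ _
      _ ≤ Nat.card (ball S n) ^ p * Nat.card (ball S n) := Nat.mul_le_mul_right _ ih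
      _ = Nat.card (ball S n) ^ (p+1) := by ring

theorem GFI.one_le_growthRate : 1 ≤ growthRate S := by
  refine le_ciInf fun n => ?_
  refine Real.one_le_rpow ?_ (by positivity)
  exact_mod_cast GFI.card_ball_pos S (n+1)

theorem GFI.growthRate_nonneg : 0 ≤ growthRate S :=
  le_trans zero_le_one (GFI.one_le_growthRate S)

theorem GFI.growthRate_le (n : ℕ) :
    growthRate S ≤ (Nat.card (ball S (n + 1)) : ℝ) ^ (((n : ℝ) + 1)⁻¹) := by
  refine ciInf_le ⟨0, ?_⟩ n
  rintro r ⟨m, rfl⟩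
  positivity

theorem GFI.list_prod_mem_ball {p : ℕ} : ∀ l : List G, (∀ x ∈ l, x ∈ ball S p) →
    l.prod ∈ ball S (p * l.length) := by
  intro l
  induction l with
  | nil => intro _; simpa using GFI.one_mem_ball S 0
  | cons x l ih =>
    intro h
    have h1 : x * l.prod ∈ ball S (p + p * l.length) :=
      GFI.mul_mem_ball S (h x (List.mem_cons_self))
        (ih fun y hy => h y (List.mem_cons_of_mem _ hy))
    rw [List.prod_cons]
    refine GFI.ball_mono S ?_ h1
    simp [List.length_cons, Nat.mul_succ]; omega

theorem GFI.exists_word (hS : Subgroup.closure (S : Set G) = ⊤) (g : G) :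
    ∃ l : List G, (∀ x ∈ l, x ∈ S ∨ x⁻¹ ∈ S) ∧ l.prod = g := by
  have hg : g ∈ Subgroup.closure (S : Set G) := hS ▸ Subgroup.mem_top g
  induction hg using Subgroup.closure_induction with
  | mem x hx => exact ⟨[x], by simpa using Or.inl hx, by simp⟩
  | one => exact ⟨[], by simp, by simp⟩
  | mul a b ha hb iha ihb =>
    obtain ⟨l, hl, hp⟩ := iha
    obtain ⟨l', hl', hp'⟩ := ihb
    exact ⟨l ++ l', fun x hx => (List.mem_append.1 hx).elim (hl x) (hl' x),
      by simp [hp, hp']⟩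
  | inv a ha iha =>
    obtain ⟨l, hl, hp⟩ := iha
    refine ⟨(l.map Inv.inv).reverse, ?_, by rw [← hp, List.prod_inv_reverse]⟩
    intro x hx
    simp only [List.mem_reverse, List.mem_map] at hx
    obtain ⟨y, hy, rfl⟩ := hx
    rcases hl y hy with h | h
    · exact Or.inr (by simpa using h)
    · exact Or.inl h

theorem GFI.exists_rep (hS : Subgroup.closure (S : Set G) = ⊤) (K : Subgroup G)
    (d : ℕ) (hd0 : 0 < d) (hd : K.index = d) (g : G) :
    ∃ h ∈ ball S (d - 1), h⁻¹ * g ∈ K := by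
  haveI : K.FiniteIndex := ⟨by omega⟩
  haveI : Finite (G ⧸ K) := K.finite_quotient_of_finiteIndex
  set C : ℕ → Set (G ⧸ K) := fun n => QuotientGroup.mk '' ball S n with hC
  have hmono : ∀ {m n : ℕ}, m ≤ n → C m ⊆ C n := by
    intro m n h
    exact Set.image_mono (GFI.ball_mono S h)
  have hstab : ∀ n, C (n + 1) ⊆ C n → ∀ m, C m ⊆ C n := by
    intro n hn m
    induction m with
    | zero => exact hmono (Nat.zero_le n)
    | succ m ih =>
      intro q hq
      obtain ⟨g, ⟨l, hl, he, hp⟩, rfl⟩ := hq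
      match l with
      | [] =>
        simp at hp
        exact hmono (Nat.zero_le n) ⟨g, by rw [← hp]; exact GFI.one_mem_ball S 0, rfl⟩
      | x :: l' =>
        have hl' : QuotientGroup.mk (s := K) l'.prod ∈ C n :=
          ih ⟨l'.prod, ⟨l', by simpa using hl,
            fun y hy => he y (List.mem_cons_of_mem _ hy), rfl⟩, rfl⟩
        obtain ⟨h, hhb, hh⟩ := hl'
        apply hn
        refine ⟨x * h, ?_, ?_⟩
        · have hx1 : x ∈ ball S 1 :=
            ⟨[x], by simp, by simpa using he x (List.mem_cons_self), by simp⟩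
          simpa [Nat.add_comm] using GFI.mul_mem_ball S hx1 hhb
        · rw [← hp, List.prod_cons]
          rw [QuotientGroup.eq] at hh ⊢
          simpa [mul_assoc] using hh
  have hcover : ∀ q : G ⧸ K, ∃ m, q ∈ C m := by
    intro q
    obtain ⟨g, rfl⟩ := QuotientGroup.mk_surjective q
    obtain ⟨l, he, hp⟩ := GFI.exists_word S hS g
    exact ⟨l.length, ⟨g, ⟨l, le_refl _, he, hp⟩, rfl⟩⟩
  have huniv : ∀ n, C (n + 1) ⊆ C n → C n = Set.univ := by
    intro n hn
    ext q
    simp only [Set.mem_univ, iff_true]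
    obtain ⟨m, hm⟩ := hcover q
    exact hstab n hn m hm
  have hgrow : ∀ j, C j = Set.univ ∨ j + 1 ≤ (C j).ncard := by
    intro j
    induction j with
    | zero =>
      right
      exact (Set.ncard_pos (Set.toFinite _)).2
        ⟨QuotientGroup.mk 1, 1, GFI.one_mem_ball S 0, rfl⟩
    | succ j ih =>
      rcases ih with h | h
      · left
        exact Set.eq_univ_of_univ_subset (h ▸ hmono (Nat.le_succ j))
      · by_cases hc : C (j+1) ⊆ C j
        · left
          exact Set.eq_univ_of_univ_subset (huniv j hc ▸ hmono (Nat.le_succ j))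
        · right
          have hss : C j ⊂ C (j+1) := ⟨hmono (Nat.le_succ j), hc⟩
          have := Set.ncard_lt_ncard hss (Set.toFinite _)
          omega
  have hfin : C (d-1) = Set.univ := by
    rcases hgrow (d-1) with h | h
    · exact h
    · refine Set.eq_of_subset_of_ncard_le (Set.subset_univ _) ?_ (Set.toFinite _)
      rw [Set.ncard_univ]
      have hcard : Nat.card (G ⧸ K) = d := hd
      omega
  have : QuotientGroup.mk (s := K) g ∈ C (d-1) := hfin ▸ Set.mem_univ _
  obtain ⟨h, hb, hh⟩ := this
  exact ⟨h, hb, (QuotientGroup.eq).1 hh⟩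

theorem GFI.schreier_gen (hS : Subgroup.closure (S : Set G) = ⊤) (K : Subgroup G)
    (d : ℕ) (hd0 : 0 < d) (hd : K.index = d) (T : Finset ↥K)
    (hT : ∀ k : ↥K, (k : G) ∈ ball S (2 * d - 1) → k ∈ T) :
    Subgroup.closure (T : Set ↥K) = ⊤ := by
  have key : ∀ l : List G, (∀ x ∈ l, x ∈ S ∨ x⁻¹ ∈ S) →
      ∀ h ∈ ball S (d - 1), ∀ hk : h⁻¹ * l.prod ∈ K,
      (⟨h⁻¹ * l.prod, hk⟩ : ↥K) ∈ Subgroup.closure (T : Set ↥K) := by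
    intro l
    induction l with
    | nil =>
      intro _ h hb hk
      apply Subgroup.subset_closure
      apply hT
      show h⁻¹ * List.prod [] ∈ ball S (2 * d - 1)
      simp only [List.prod_nil, mul_one]
      exact GFI.inv_mem_ball S (GFI.ball_mono S (by omega) hb)
    | cons x l ih =>
      intro he h hb hk
      obtain ⟨h', hb', hk'⟩ := GFI.exists_rep S hS K d hd0 hd l.prod
      have htK : h⁻¹ * x * h' ∈ K := by
        have : h⁻¹ * x * h' = (h⁻¹ * (x :: l).prod) * (h'⁻¹ * l.prod)⁻¹ := by
          simp [List.prod_cons, mul_assoc]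
        rw [this]
        exact K.mul_mem hk (K.inv_mem hk')
      have htb : h⁻¹ * x * h' ∈ ball S (2 * d - 1) := by
        have h1 : x ∈ ball S 1 :=
          ⟨[x], by simp, by simpa using he x (List.mem_cons_self), by simp⟩
        have := GFI.mul_mem_ball S (GFI.mul_mem_ball S (GFI.inv_mem_ball S hb) h1) hb'
        exact GFI.ball_mono S (by omega) this
      have hk'' := ih (fun y hy => he y (List.mem_cons_of_mem _ hy)) h' hb' hk'
      have : (⟨h⁻¹ * (x :: l).prod, hk⟩ : ↥K) =
          (⟨h⁻¹ * x * h', htK⟩ : ↥K) * ⟨h'⁻¹ * l.prod, hk'⟩ := by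
        apply Subtype.ext
        simp [List.prod_cons, mul_assoc]
      rw [this]
      exact Subgroup.mul_mem _ (Subgroup.subset_closure (hT _ htb)) hk''
  rw [eq_top_iff']
  intro k
  obtain ⟨l, he, hp⟩ := GFI.exists_word S hS (k : G)
  have hk : (1:G)⁻¹ * l.prod ∈ K := by
    simpa [hp] using k.2
  have := key l he 1 (GFI.one_mem_ball S (d-1)) hk
  have heq : (⟨(1:G)⁻¹ * l.prod, hk⟩ : ↥K) = k := by
    apply Subtype.ext
    simp [hp]
  rwa [heq] at this

theorem GFI.coe_ball_subset (K : Subgroup G) (T : Finset ↥K) (p : ℕ)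
    (hT : ∀ x ∈ T, (x : G) ∈ ball S p) {n : ℕ} {k : ↥K} (hk : k ∈ ball T n) :
    (k : G) ∈ ball S (p * n) := by
  obtain ⟨l, hl, he, hp⟩ := hk
  have hprod : (l.map K.subtype).prod = (k : G) := by
    rw [List.prod_hom l K.subtype, hp]; rfl
  have hmem : ∀ y ∈ l.map K.subtype, y ∈ ball S p := by
    intro y hy
    obtain ⟨x, hx, rfl⟩ := List.mem_map.1 hy
    rcases he x hx with h | h
    · exact hT x h
    · have := hT _ h
      have h2 : ((x⁻¹ : ↥K) : G) = (x : G)⁻¹ := rfl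
      rw [h2] at this
      simpa using GFI.inv_mem_ball S this
  have := GFI.list_prod_mem_ball S (l.map K.subtype) hmem
  rw [hprod, List.length_map] at this
  exact GFI.ball_mono S (Nat.mul_le_mul_left p hl) this

theorem GFI.card_ball_le (K : Subgroup G) (T : Finset ↥K) (p : ℕ)
    (hT : ∀ x ∈ T, (x : G) ∈ ball S p) (n : ℕ) :
    Nat.card (ball T n) ≤ Nat.card (ball S (p * n)) := by
  haveI := (GFI.ball_finite S (p * n)).to_subtype
  exact Nat.card_le_card_of_injective
    (fun k => (⟨(k.1 : G), GFI.coe_ball_subset S K T p hT k.2⟩ : ball S (p * n)))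
    (fun a b h => by
      apply Subtype.ext; apply Subtype.ext
      have := congrArg Subtype.val h
      simpa using this)

theorem GFI.growthRate_rpow_le (K : Subgroup G) (T : Finset ↥K) (p : ℕ) (hp : 0 < p)
    (hT : ∀ x ∈ T, (x : G) ∈ ball S p) :
    growthRate T ^ ((p : ℝ)⁻¹) ≤ growthRate S := by
  refine le_ciInf fun m => ?_
  set c : ℝ := (Nat.card (ball S (m + 1)) : ℝ) with hc
  have hc0 : 0 ≤ c := by positivity
  have h2 : (Nat.card (ball T (m+1)) : ℝ) ≤ c ^ (p : ℕ) := by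
    have := (GFI.card_ball_le S K T p hT (m+1)).trans (GFI.card_ball_mul_le S p (m+1))
    rw [hc]
    exact_mod_cast this
  have h4 : growthRate T ≤ (c ^ (((m : ℝ) + 1)⁻¹)) ^ (p : ℝ) := by
    calc growthRate T ≤ (Nat.card (ball T (m+1)) : ℝ) ^ (((m : ℝ) + 1)⁻¹) :=
          GFI.growthRate_le T m
      _ ≤ (c ^ (p : ℕ) : ℝ) ^ (((m : ℝ) + 1)⁻¹) := by
          apply Real.rpow_le_rpow (by positivity) h2 (by positivity)
      _ = (c ^ ((p : ℝ))) ^ (((m : ℝ) + 1)⁻¹) := by rw [Real.rpow_natCast]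
      _ = c ^ (((p : ℝ)) * ((m : ℝ) + 1)⁻¹) := by rw [← Real.rpow_mul hc0]
      _ = c ^ ((((m : ℝ) + 1)⁻¹) * (p : ℝ)) := by rw [mul_comm]
      _ = (c ^ (((m : ℝ) + 1)⁻¹)) ^ (p : ℝ) := by rw [Real.rpow_mul hc0]
  have hterm : 0 ≤ c ^ (((m : ℝ) + 1)⁻¹) := by positivity
  calc growthRate T ^ ((p : ℝ)⁻¹)
      ≤ ((c ^ (((m : ℝ) + 1)⁻¹)) ^ (p : ℝ)) ^ ((p : ℝ)⁻¹) :=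
        Real.rpow_le_rpow (GFI.growthRate_nonneg T) h4 (by positivity)
    _ = c ^ (((m : ℝ) + 1)⁻¹) := by
        rw [← Real.rpow_mul hterm, mul_inv_cancel₀ (by positivity : (p:ℝ) ≠ 0),
          Real.rpow_one]

end Aux

/-- `β(Γ) ≥ β(K)^{1/(2d−1)}` for a subgroup `K` of finite index `d`. -/
theorem growth_of_finite_index_subgroup {G : Type*} [Group G]
    (hfg : Group.FG G) (K : Subgroup G) (d : ℕ) (hd0 : 0 < d) (hd : K.index = d) :
    groupGrowthRate ↥K ^ ((2 * (d : ℝ) - 1)⁻¹) ≤ groupGrowthRate G := by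
  set p : ℕ := 2 * d - 1 with hp
  have hp0 : 0 < p := by omega
  have hpcast : ((p : ℕ) : ℝ) = 2 * (d : ℝ) - 1 := by
    have : (p : ℕ) = 2 * d - 1 := rfl
    push_cast [this, Nat.cast_sub (by omega : 1 ≤ 2 * d)]
    ring
  rw [← hpcast]
  -- the generating set of K obtained from a generating set S of G
  have build : ∀ S : Finset G, Subgroup.closure (S : Set G) = ⊤ →
      ∃ T : Finset ↥K, Subgroup.closure (T : Set ↥K) = ⊤ ∧
        growthRate T ^ ((p : ℝ)⁻¹) ≤ growthRate S := by
    intro S hS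
    refine ⟨(GFI.ball_finite S p).toFinset.preimage Subtype.val
      (Set.injOn_of_injective Subtype.val_injective), ?_, ?_⟩
    · refine GFI.schreier_gen S hS K d hd0 hd _ fun k hk => ?_
      rw [Finset.mem_preimage, Set.Finite.mem_toFinset]
      exact hk
    · refine GFI.growthRate_rpow_le S K _ p hp0 fun x hx => ?_
      rw [Finset.mem_preimage, Set.Finite.mem_toFinset] at hx
      exact hx
  obtain ⟨S0, hS0⟩ := hfg.out
  obtain ⟨T0, hT0, _⟩ := build S0 hS0
  -- the K-set is nonempty and bounded below
  have hKne : {r : ℝ | ∃ T : Finset ↥K, Subgroup.closure (T : Set ↥K) = ⊤ ∧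
      r = growthRate T}.Nonempty := ⟨growthRate T0, T0, hT0, rfl⟩
  have hKlb : ∀ r ∈ {r : ℝ | ∃ T : Finset ↥K, Subgroup.closure (T : Set ↥K) = ⊤ ∧
      r = growthRate T}, (1:ℝ) ≤ r := by
    rintro r ⟨T, -, rfl⟩
    exact GFI.one_le_growthRate T
  have hK1 : (1:ℝ) ≤ groupGrowthRate ↥K := le_csInf hKne hKlb
  have hK0 : (0:ℝ) ≤ groupGrowthRate ↥K := le_trans zero_le_one hK1
  -- lower bound for the G-set
  refine le_csInf ⟨growthRate S0, S0, hS0, rfl⟩ ?_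
  rintro r ⟨S, hS, rfl⟩
  obtain ⟨T, hTgen, hTle⟩ := build S hS
  have h1 : groupGrowthRate ↥K ≤ growthRate T :=
    csInf_le ⟨1, hKlb⟩ ⟨T, hTgen, rfl⟩
  calc groupGrowthRate ↥K ^ ((p : ℝ)⁻¹)
      ≤ growthRate T ^ ((p : ℝ)⁻¹) :=
        Real.rpow_le_rpow hK0 h1 (by positivity)
    _ ≤ growthRate S := hTle
end

section
/- Let Γ be a finitely generated group. Suppose Γ has a subgroup K of finite index and there is a surjective group homomorphism from K onto a group Q which is finitely generated and has uniform exponential growth. Then Γ has uniform exponential growth. -/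
open Subgroup

open Pointwise

namespace MyAux

section BallBasics

variable {G : Type*} [Group G] (S : Finset G)

lemma one_mem_ball (n : ℕ) : (1 : G) ∈ ball S n :=
  ⟨[], by simp, by simp, by simp⟩

lemma ball_mono {m n : ℕ} (h : m ≤ n) : ball S m ⊆ ball S n := by
  rintro g ⟨l, hl, hx, rfl⟩; exact ⟨l, hl.trans h, hx, rfl⟩

lemma mul_mem_ball {a b : G} {m n : ℕ} (ha : a ∈ ball S m) (hb : b ∈ ball S n) :
    a * b ∈ ball S (m + n) := by
  obtain ⟨l, hl, hx, rfl⟩ := ha; obtain ⟨l', hl', hx', rfl⟩ := hb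
  refine ⟨l ++ l', by simpa using Nat.add_le_add hl hl', fun x hx'' => ?_, by simp⟩
  rcases List.mem_append.1 hx'' with h | h
  exacts [hx x h, hx' x h]

lemma inv_mem_ball {a : G} {n : ℕ} (ha : a ∈ ball S n) : a⁻¹ ∈ ball S n := by
  obtain ⟨l, hl, hx, rfl⟩ := ha
  refine ⟨(l.map fun x => x⁻¹).reverse, by simpa using hl, fun x hx' => ?_,
    (List.prod_inv_reverse l).symm⟩
  simp only [List.mem_reverse, List.mem_map] at hx'
  obtain ⟨y, hy, rfl⟩ := hx'
  rcases hx y hy with h | h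
  · exact Or.inr (by simpa using h)
  · exact Or.inl h

lemma ball_subset_mul (m n : ℕ) : ball S (m + n) ⊆ ball S m * ball S n := by
  rintro g ⟨l, hl, hx, rfl⟩
  refine ⟨(l.take m).prod, ⟨l.take m, ?_, fun x hx' => hx x (List.mem_of_mem_take hx'), rfl⟩,
    (l.drop m).prod, ⟨l.drop m, ?_, fun x hx' => hx x (List.mem_of_mem_drop hx'), rfl⟩,
    List.prod_take_mul_prod_drop l m⟩
  · simp [Nat.min_le_left]
  · simpa using Nat.sub_le_of_le_add (by omega)

lemma ball_zero : ball S 0 = {1} := by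
  ext g
  constructor
  · rintro ⟨l, hl, -, rfl⟩
    simp [List.length_eq_zero_iff.1 (Nat.le_zero.1 hl)]
  · rintro rfl; exact one_mem_ball S 0

lemma ball_one_subset : ball S 1 ⊆ insert 1 ((S : Set G) ∪ ((S : Set G))⁻¹) := by
  rintro g ⟨l, hl, hx, rfl⟩
  match l, hl with
  | [], _ => simp
  | [x], _ =>
    rcases hx x (by simp) with h | h
    · exact Or.inr (Or.inl (by simpa using h))
    · exact Or.inr (Or.inr (by simpa using h))

lemma ball_finite (n : ℕ) : (ball S n).Finite := by
  induction n with
  | zero => rw [ball_zero]; exact Set.finite_singleton 1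
  | succ n ih =>
    have h1 : (ball S 1).Finite :=
      Set.Finite.subset (by
        refine Set.Finite.insert 1 (Set.Finite.union S.finite_toSet ?_)
        exact Set.Finite.inv S.finite_toSet) (ball_one_subset S)
    have : ball S (1 + n) ⊆ ball S 1 * ball S n := ball_subset_mul S 1 n
    rw [Nat.add_comm 1 n] at this
    exact Set.Finite.subset (Set.Finite.mul h1 ih) this

lemma natCard_ball_pos (n : ℕ) : 0 < Nat.card (ball S n) := by
  have := (ball_finite S n).to_subtype
  exact Nat.card_pos_iff.2 ⟨⟨1, one_mem_ball S n⟩, this⟩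

lemma natCard_ball_mul_le (m n : ℕ) :
    Nat.card (ball S (m + n)) ≤ Nat.card (ball S m) * Nat.card (ball S n) :=
  le_trans (Nat.card_mono (Set.Finite.mul (ball_finite S m) (ball_finite S n))
    (ball_subset_mul S m n)) Set.natCard_mul_le

lemma natCard_ball_pow_le (k m : ℕ) :
    Nat.card (ball S (k * m)) ≤ Nat.card (ball S m) ^ k := by
  induction k with
  | zero => simp [ball_zero]
  | succ k ih =>
    have : (k + 1) * m = m + k * m := by ring
    rw [this, pow_succ]
    calc Nat.card (ball S (m + k * m)) ≤ Nat.card (ball S m) * Nat.card (ball S (k * m)) :=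
          natCard_ball_mul_le S m (k * m)
      _ ≤ Nat.card (ball S m) * Nat.card (ball S m) ^ k :=
          Nat.mul_le_mul_left _ ih
      _ = Nat.card (ball S m) ^ k * Nat.card (ball S m) := by ring

end BallBasics

section GrowthRate

variable {G : Type*} [Group G] (S : Finset G)

lemma one_le_card_ball (n : ℕ) : (1 : ℝ) ≤ (Nat.card (ball S n) : ℝ) := by
  exact_mod_cast natCard_ball_pos S n

lemma one_le_term (n : ℕ) :
    (1 : ℝ) ≤ (Nat.card (ball S (n + 1)) : ℝ) ^ (((n : ℝ) + 1)⁻¹) :=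
  Real.one_le_rpow (one_le_card_ball S (n + 1)) (by positivity)

lemma bdd : BddBelow (Set.range fun n : ℕ =>
    (Nat.card (ball S (n + 1)) : ℝ) ^ (((n : ℝ) + 1)⁻¹)) :=
  ⟨1, by rintro x ⟨n, rfl⟩; exact one_le_term S n⟩

lemma one_le_growthRate : 1 ≤ growthRate S :=
  le_ciInf fun n => one_le_term S n

lemma growthRate_le (n : ℕ) :
    growthRate S ≤ (Nat.card (ball S (n + 1)) : ℝ) ^ (((n : ℝ) + 1)⁻¹) :=
  ciInf_le (bdd S) n

lemma growthRate_pow_le (n : ℕ) :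
    growthRate S ^ (n + 1) ≤ (Nat.card (ball S (n + 1)) : ℝ) := by
  have h0 : (0 : ℝ) ≤ growthRate S := le_trans zero_le_one (one_le_growthRate S)
  have hb : (0 : ℝ) ≤ (Nat.card (ball S (n + 1)) : ℝ) := Nat.cast_nonneg _
  have := pow_le_pow_left₀ h0 (growthRate_le S n) (n + 1)
  refine this.trans (le_of_eq ?_)
  rw [← Real.rpow_natCast ((Nat.card (ball S (n+1)) : ℝ) ^ (((n : ℝ) + 1)⁻¹)) (n+1),
    ← Real.rpow_mul hb]
  rw [show (((n : ℝ) + 1)⁻¹ * ((n + 1 : ℕ) : ℝ)) = 1 by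
    push_cast; field_simp]
  exact Real.rpow_one _

/-- Main comparison lemma: if balls of `U` inject (cardinality-wise) into `L`-times
larger balls of `S`, then `β(U)^(1/L) ≤ β(S)`. -/
lemma growth_comparison {Q : Type*} [Group Q] (U : Finset Q) (L : ℕ) (hL : 1 ≤ L)
    (h : ∀ n : ℕ, Nat.card (ball U n) ≤ Nat.card (ball S (L * n))) :
    growthRate U ^ ((L : ℝ))⁻¹ ≤ growthRate S := by
  refine le_ciInf fun m => ?_
  set c := growthRate U with hc
  set b := (Nat.card (ball S (m + 1)) : ℝ) with hbdef
  have hc0 : (0 : ℝ) ≤ c := le_trans zero_le_one (one_le_growthRate U)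
  have hb0 : (0 : ℝ) ≤ b := Nat.cast_nonneg _
  have key : c ^ (m + 1) ≤ b ^ L := by
    calc c ^ (m + 1) ≤ (Nat.card (ball U (m + 1)) : ℝ) := growthRate_pow_le U m
      _ ≤ (Nat.card (ball S (L * (m + 1))) : ℝ) := by exact_mod_cast h (m + 1)
      _ ≤ b ^ L := by
        rw [hbdef]
        exact_mod_cast natCard_ball_pow_le S L (m + 1)
  have hM : ((m : ℝ) + 1) ≠ 0 := by positivity
  have hLR : ((L : ℝ)) ≠ 0 := by
    have : (0:ℕ) < L := hL
    exact_mod_cast this.ne'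
  have := Real.rpow_le_rpow (by positivity) key
    (by positivity : (0:ℝ) ≤ (((m : ℝ) + 1) * (L : ℝ))⁻¹)
  calc c ^ ((L : ℝ))⁻¹ = (c ^ (m + 1)) ^ ((((m : ℝ) + 1) * (L : ℝ))⁻¹) := by
        rw [← Real.rpow_natCast c (m + 1), ← Real.rpow_mul hc0]
        congr 1
        push_cast
        field_simp
    _ ≤ (b ^ L) ^ ((((m : ℝ) + 1) * (L : ℝ))⁻¹) := this
    _ = b ^ (((m : ℝ) + 1)⁻¹) := by
        rw [← Real.rpow_natCast b L, ← Real.rpow_mul hb0]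
        congr 1
        field_simp

end GrowthRate

section Words

variable {G : Type*} [Group G] (S : Finset G)

lemma exists_mem_ball (hS : closure (S : Set G) = ⊤) (g : G) : ∃ n, g ∈ ball S n := by
  have hg : g ∈ closure (S : Set G) := hS ▸ mem_top g
  induction hg using closure_induction with
  | mem x hx => exact ⟨1, [x], by simp, by simpa using Or.inl hx, by simp⟩
  | one => exact ⟨0, one_mem_ball S 0⟩
  | mul x y hx hy ihx ihy =>
    obtain ⟨n, hn⟩ := ihx; obtain ⟨m, hm⟩ := ihy
    exact ⟨n + m, mul_mem_ball S hn hm⟩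
  | inv x hx ihx =>
    obtain ⟨n, hn⟩ := ihx
    exact ⟨n, inv_mem_ball S hn⟩

lemma list_prod_mem_ball {L : ℕ} :
    ∀ l : List G, (∀ x ∈ l, x ∈ ball S L) → l.prod ∈ ball S (L * l.length)
  | [], _ => by simpa using one_mem_ball S 0
  | x :: xs, h => by
    have hx := h x (by simp)
    have hxs := list_prod_mem_ball xs fun y hy => h y (by simp [hy])
    have := mul_mem_ball S hx hxs
    simpa [Nat.mul_succ, Nat.mul_add, Nat.add_comm] using this

/-- Words in `T ⊆ K ∩ ball S L` give elements of `ball S (L * n)`. -/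
lemma coe_ball_subset {K : Subgroup G} (T : Finset K) (L n : ℕ)
    (hT : ∀ t ∈ T, (t : G) ∈ ball S L) {k : K} (hk : k ∈ ball T n) :
    (k : G) ∈ ball S (L * n) := by
  obtain ⟨l, hl, hx, rfl⟩ := hk
  have hcoe : ((l.prod : K) : G) = (l.map (K.subtype)).prod := by
    simpa using (map_list_prod K.subtype l).symm ▸ rfl
  have hmem : ∀ x ∈ l.map (K.subtype), x ∈ ball S L := by
    intro x hx'
    simp only [List.mem_map] at hx'
    obtain ⟨t, ht, rfl⟩ := hx'
    rcases hx t ht with h | h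
    · exact hT t h
    · have := hT _ h
      have : ((t⁻¹ : K) : G) ∈ ball S L := this
      have h2 := inv_mem_ball S this
      simpa using h2
  have := list_prod_mem_ball S (l.map (K.subtype)) hmem
  rw [← hcoe] at this
  exact ball_mono S (Nat.mul_le_mul_left L (by simpa using hl)) this

end Words

section Image

/-- Lists over an image generating set lift along the homomorphism. -/
lemma exists_preimage_list {H Q : Type*} [Group H] [Group Q] [DecidableEq Q]
    (f : H →* Q) (T : Finset H) :
    ∀ l' : List Q, (∀ x ∈ l', x ∈ T.image f ∨ x⁻¹ ∈ T.image f) →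
      ∃ l : List H, l.length = l'.length ∧ (∀ t ∈ l, t ∈ T ∨ t⁻¹ ∈ T) ∧ l.map f = l'
  | [], _ => ⟨[], by simp, by simp, by simp⟩
  | x :: xs, h => by
    obtain ⟨l, hlen, hmem, hmap⟩ := exists_preimage_list f T xs fun y hy => h y (by simp [hy])
    rcases h x (by simp) with hx | hx
    · obtain ⟨t, ht, rfl⟩ := Finset.mem_image.1 hx
      exact ⟨t :: l, by simp [hlen], by
        intro a ha
        rcases List.mem_cons.1 ha with rfl | ha
        · exact Or.inl ht
        · exact hmem a ha, by simp [hmap]⟩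
    · obtain ⟨t, ht, hfx⟩ := Finset.mem_image.1 hx
      refine ⟨t⁻¹ :: l, by simp [hlen], ?_, ?_⟩
      · intro a ha
        rcases List.mem_cons.1 ha with rfl | ha
        · exact Or.inr (by simpa using ht)
        · exact hmem a ha
      · simp only [List.map_cons, hmap, map_inv, hfx, inv_inv]

lemma mem_ball_image {H Q : Type*} [Group H] [Group Q] [DecidableEq Q]
    (f : H →* Q) (T : Finset H) {k : H} {n : ℕ} (hk : k ∈ ball T n) :
    f k ∈ ball (T.image f) n := by
  obtain ⟨l, hl, hx, rfl⟩ := hk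
  refine ⟨l.map f, by simpa using hl, ?_, (map_list_prod f l).symm⟩
  intro x hx'
  simp only [List.mem_map] at hx'
  obtain ⟨t, ht, rfl⟩ := hx'
  rcases hx t ht with h | h
  · exact Or.inl (Finset.mem_image_of_mem f h)
  · exact Or.inr (by simpa using Finset.mem_image_of_mem f h)

lemma card_ball_image_le {H Q : Type*} [Group H] [Group Q] [DecidableEq Q]
    (f : H →* Q) (T : Finset H) (n : ℕ) :
    Nat.card (ball (T.image f) n) ≤ Nat.card (ball T n) := by
  have hfin := (ball_finite T n).to_subtype
  refine Nat.card_le_card_of_surjective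
    (fun k : ball T n => (⟨f k.1, mem_ball_image f T k.2⟩ : ball (T.image f) n)) ?_
  rintro ⟨q, l', hl', hx', rfl⟩
  obtain ⟨l, hlen, hmem, hmap⟩ := exists_preimage_list f T l' hx'
  refine ⟨⟨l.prod, l, by omega, hmem, rfl⟩, ?_⟩
  ext
  simp [← hmap, map_list_prod]

lemma card_ball_le_of_coe {G : Type*} [Group G] {K : Subgroup G} (S : Finset G) (T : Finset K)
    (L n : ℕ) (h : ∀ k : K, k ∈ ball T n → (k : G) ∈ ball S (L * n)) :
    Nat.card (ball T n) ≤ Nat.card (ball S (L * n)) := by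
  have hfin := (ball_finite S (L * n)).to_subtype
  exact Nat.card_le_card_of_injective
    (fun k : ball T n => (⟨(k.1 : G), h k.1 k.2⟩ : ball S (L * n)))
    (fun a b hab => by
      ext
      exact congrArg (Subtype.val : ball S (L * n) → G) hab)

end Image

section Schreier

variable {G : Type*} [Group G]

lemma take_prod_mem_ball (S : Finset G) {l : List G} (hx : ∀ x ∈ l, x ∈ S ∨ x⁻¹ ∈ S)
    (i : ℕ) : (l.take i).prod ∈ ball S i :=
  ⟨l.take i, by simpa using Nat.min_le_left i l.length,
    fun x hx' => hx x (List.mem_of_mem_take hx'), rfl⟩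

lemma drop_prod_mem_ball (S : Finset G) {l : List G} (hx : ∀ x ∈ l, x ∈ S ∨ x⁻¹ ∈ S)
    (j : ℕ) : (l.drop j).prod ∈ ball S (l.length - j) :=
  ⟨l.drop j, by simp, fun x hx' => hx x (List.mem_of_mem_drop hx'), rfl⟩

/-- Key (Schreier-type) lemma: every element of `K` is a product of elements of
`K ∩ ball S (2 * index - 1)`. -/
lemma key_gen (K : Subgroup G) (hK : K.index ≠ 0) (S : Finset G) :
    ∀ n : ℕ, ∀ g : G, g ∈ ball S n → ∀ hg : g ∈ K,
      (⟨g, hg⟩ : K) ∈ closure {t : K | (t : G) ∈ ball S (2 * K.index - 1)} := by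
  intro n
  induction n using Nat.strong_induction_on with
  | _ n IH =>
    intro g hgball hg
    set d := K.index with hd
    have hd1 : 1 ≤ d := Nat.pos_of_ne_zero hK
    by_cases hsmall : n ≤ 2 * d - 1
    · exact subset_closure (ball_mono S hsmall hgball)
    push_neg at hsmall
    have hn2d : 2 * d ≤ n := by omega
    obtain ⟨l, hl, hx, rfl⟩ := hgball
    rcases Nat.lt_or_ge l.length n with hlt | hge
    · exact IH l.length hlt l.prod ⟨l, le_rfl, hx, rfl⟩ hg
    have hlen : l.length = n := le_antisymm hl hge
    -- pigeonhole on cosets of prefixes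
    have hfinQ : Finite (G ⧸ K) := by
      have : 0 < Nat.card (G ⧸ K) := by
        rw [← index_eq_card]; exact Nat.pos_of_ne_zero hK
      exact (Nat.card_pos_iff.mp this).2
    set φ : Fin (d + 1) → G ⧸ K := fun i => ((((l.take i.1).prod)⁻¹ : G) : G ⧸ K) with hφ
    have hninj : ¬ Function.Injective φ := by
      intro hinj
      have := Nat.card_le_card_of_injective φ hinj
      rw [Nat.card_eq_fintype_card, Fintype.card_fin, ← index_eq_card] at this
      omega
    simp only [Function.Injective, not_forall] at hninj
    obtain ⟨i, j, hij, hne⟩ := hninj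
    have main : ∀ i j : Fin (d + 1), i.1 < j.1 → φ i = φ j →
        (⟨l.prod, hg⟩ : K) ∈ closure {t : K | (t : G) ∈ ball S (2 * K.index - 1)} := by
      intro i j hlt hfeq
      have hi : i.1 ≤ d := by omega
      have hj : j.1 ≤ d := by omega
      set p := fun m : ℕ => (l.take m).prod with hp
      have hKmem : (p i.1) * (p j.1)⁻¹ ∈ K := by
        have := (QuotientGroup.eq (s := K)).1 hfeq
        simpa using this
      have hKh : (p j.1) * (p i.1)⁻¹ ∈ K := by
        have := K.inv_mem hKmem
        simpa using this
      have hball : (p j.1) * (p i.1)⁻¹ ∈ ball S (2 * d - 1) := by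
        have h1 : p j.1 ∈ ball S j.1 := take_prod_mem_ball S hx j.1
        have h2 : (p i.1)⁻¹ ∈ ball S i.1 := inv_mem_ball S (take_prod_mem_ball S hx i.1)
        exact ball_mono S (by omega) (mul_mem_ball S h1 h2)
      set g' := p i.1 * (l.drop j.1).prod with hg'
      have hgfact : l.prod = ((p j.1) * (p i.1)⁻¹) * g' := by
        rw [hg', hp]
        simp only [mul_assoc]
        rw [inv_mul_cancel_left]
        exact (List.prod_take_mul_prod_drop l j.1).symm
      have hg'K : g' ∈ K := by
        have : g' = ((p j.1) * (p i.1)⁻¹)⁻¹ * l.prod := by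
          rw [hgfact]; group
        rw [this]
        exact K.mul_mem (K.inv_mem hKh) hg
      have hg'ball : g' ∈ ball S (i.1 + (n - j.1)) := by
        have h1 : p i.1 ∈ ball S i.1 := take_prod_mem_ball S hx i.1
        have h2 : (l.drop j.1).prod ∈ ball S (n - j.1) := by
          have := drop_prod_mem_ball S hx j.1
          rwa [hlen] at this
        exact mul_mem_ball S h1 h2
      have hm' : i.1 + (n - j.1) < n := by omega
      have hrec := IH _ hm' g' hg'ball hg'K
      have hhcl : (⟨(p j.1) * (p i.1)⁻¹, hKh⟩ : K) ∈
          closure {t : K | (t : G) ∈ ball S (2 * K.index - 1)} :=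
        subset_closure hball
      have : (⟨l.prod, hg⟩ : K) = ⟨(p j.1) * (p i.1)⁻¹, hKh⟩ * ⟨g', hg'K⟩ := by
        ext; simpa using hgfact
      rw [this]
      exact Subgroup.mul_mem _ hhcl hrec
    have hvne : i.1 ≠ j.1 := fun h => hne (Fin.ext h)
    rcases Ne.lt_or_gt hvne with h | h
    · exact main i j h hij
    · exact main j i h hij.symm

end Schreier

end MyAux

open MyAux

/-- uniform exponential growth of an image of a finite-index subgroup
passes to the group. -/
theorem uniform_growth_of_quotient_of_finite_index_subgroup
    {G Q : Type*} [Group G] [Group Q] (hfg : Group.FG G)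
    (K : Subgroup G) (hK : K.index ≠ 0)
    (f : ↥K →* Q) (hf : Function.Surjective f)
    (hQfg : Group.FG Q) (hQ : UniformExponentialGrowth Q) :
    UniformExponentialGrowth G := by
  classical
  set L := 2 * K.index - 1 with hLdef
  have hd1 : 1 ≤ K.index := Nat.pos_of_ne_zero hK
  have hL1 : 1 ≤ L := by omega
  have hL0 : (0 : ℝ) < (L : ℝ)⁻¹ := by
    rw [inv_pos]; exact_mod_cast hL1
  have hgQ : 1 < groupGrowthRate Q := hQ
  set c0 : ℝ := groupGrowthRate Q ^ ((L : ℝ))⁻¹ with hc0def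
  have hc0 : 1 < c0 :=
    (Real.one_lt_rpow_iff_of_pos (by linarith)).2 (Or.inl ⟨hgQ, hL0⟩)
  -- the set of growth rates of G is nonempty
  obtain ⟨n₀, S₀, -, hS₀⟩ := Group.fg_iff'.mp hfg
  have hAne : {r : ℝ | ∃ S : Finset G,
      Subgroup.closure (S : Set G) = ⊤ ∧ r = growthRate S}.Nonempty :=
    ⟨growthRate S₀, S₀, hS₀, rfl⟩
  refine lt_of_lt_of_le hc0 (le_csInf hAne ?_)
  rintro r ⟨S, hSgen, rfl⟩
  -- the finite generating set of K inside ball S L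
  have hTfin : {t : K | (t : G) ∈ ball S L}.Finite := by
    refine Set.Finite.preimage ?_ (ball_finite S L)
    exact Set.injOn_of_injective Subtype.val_injective
  set T : Finset K := hTfin.toFinset with hTdef
  have hTmem : ∀ t ∈ T, (t : G) ∈ ball S L := by
    intro t ht; rwa [hTdef, Set.Finite.mem_toFinset] at ht
  have hTgen : closure (T : Set K) = ⊤ := by
    rw [hTdef, Set.Finite.coe_toFinset]
    rw [eq_top_iff]
    rintro k -
    obtain ⟨n, hn⟩ := exists_mem_ball S hSgen (k : G)
    have := key_gen K hK S n (k : G) hn k.2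
    simpa using this
  -- push to Q
  set U : Finset Q := T.image f with hUdef
  have hUgen : closure (U : Set Q) = ⊤ := by
    rw [hUdef, Finset.coe_image, ← MonoidHom.map_closure, hTgen,
      Subgroup.map_top_of_surjective f hf]
  have hcomp : ∀ n : ℕ, Nat.card (ball U n) ≤ Nat.card (ball S (L * n)) := fun n =>
    (card_ball_image_le f T n).trans
      (card_ball_le_of_coe S T L n fun k hk => coe_ball_subset S T L n hTmem hk)
  have hmain : growthRate U ^ ((L : ℝ))⁻¹ ≤ growthRate S :=
    growth_comparison S U L hL1 hcomp
  have hQle : groupGrowthRate Q ≤ growthRate U :=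
    csInf_le ⟨1, by rintro x ⟨V, hV, rfl⟩; exact one_le_growthRate V⟩ ⟨U, hUgen, rfl⟩
  calc c0 ≤ growthRate U ^ ((L : ℝ))⁻¹ :=
        Real.rpow_le_rpow (by linarith) hQle (le_of_lt hL0)
    _ ≤ growthRate S := hmain
end

section
/- Let A ∈ GL(r, ℤ) act on ℤ^r, and let v ∈ ℤ^r. Suppose that the restriction of A, viewed as a linear map on ℂ^r, to the A-invariant subspace span_ℂ{A^i v : i ≥ 0} (the complexified cyclic submodule generated by v) has an eigenvalue λ with |λ| ≥ 2. Then in the split extension ℤ^r ⋊_A ℤ, the elements t and t·v generate a free semigroup, where t denotes the element of the semidirect product mapping to the generator 1 of ℤ (acting on ℤ^r by A) and v is identified with its image in the normal subgroup ℤ^r. -/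
open Subgroup

open Matrix in
/-- The automorphism of `ℤ^r` determined by `A ∈ GL(r,ℤ)`. -/
noncomputable def glAddAut {r : ℕ} (A : GL (Fin r) ℤ) : AddAut (Fin r → ℤ) :=
  (Matrix.GeneralLinearGroup.toLin A).toLinearEquiv.toAddEquiv

open Matrix in
/-- The action of `ℤ` on `ℤ^r` by powers of `A`, as used in the split extension
`ℤ^r ⋊_A ℤ`. -/
noncomputable def glZAction {r : ℕ} (A : GL (Fin r) ℤ) :
    Multiplicative ℤ →* MulAut (Multiplicative (Fin r → ℤ)) :=
  zpowersHom _ (AddEquiv.toMultiplicative (glAddAut A))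

open Matrix Finset in
private lemma aux_geom_sum_le (t : ℝ) (ht : 2 ≤ t) (n : ℕ) :
    ∑ i ∈ Finset.range n, t ^ i ≤ t ^ n - 1 := by
  induction n with
  | zero => simp
  | succ n ih =>
    rw [Finset.sum_range_succ, pow_succ]
    nlinarith [pow_nonneg (by linarith : (0:ℝ) ≤ t) n]

open Matrix Finset in
private lemma aux_delta_zero (lam : ℂ) (hlam : 2 ≤ ‖lam‖)
    (δ : ℕ → ℤ) (hδ : ∀ i, |δ i| ≤ 1) :
    ∀ k, (∑ i ∈ Finset.range k, (δ i : ℂ) * lam ^ i) = 0 → ∀ i < k, δ i = 0 := by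
  intro k
  induction k with
  | zero => exact fun _ i hi => absurd hi (Nat.not_lt_zero i)
  | succ k ih =>
    intro h i hi
    have hk : δ k = 0 := by
      by_contra hk
      have h1 : (1:ℝ) ≤ |(δ k : ℝ)| := by
        have := Int.one_le_abs hk
        exact_mod_cast (by exact_mod_cast this : (1:ℝ) ≤ ((|δ k| : ℤ) : ℝ))
      rw [Finset.sum_range_succ] at h
      have heq : (δ k : ℂ) * lam ^ k = - ∑ i ∈ Finset.range k, (δ i : ℂ) * lam ^ i := by
        linear_combination h
      have habs : ‖(δ k : ℂ) * lam ^ k‖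
          ≤ ∑ i ∈ Finset.range k, ‖(δ i : ℂ) * lam ^ i‖ := by
        rw [heq, norm_neg]
        exact norm_sum_le _ _
      have h2 : ∀ j, ‖(δ j : ℂ) * lam ^ j‖
          = |(δ j : ℝ)| * ‖lam‖ ^ j := by
        intro j
        rw [norm_mul, norm_pow, Complex.norm_intCast]
      have h3 : ∑ i ∈ Finset.range k, ‖(δ i : ℂ) * lam ^ i‖
          ≤ ∑ i ∈ Finset.range k, ‖lam‖ ^ i := by
        refine Finset.sum_le_sum fun i _ => ?_
        rw [h2]
        have : |(δ i : ℝ)| ≤ 1 := by exact_mod_cast hδ i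
        nlinarith [pow_nonneg (by linarith : (0:ℝ) ≤ ‖lam‖) i]
      have h4 := aux_geom_sum_le ‖lam‖ hlam k
      have h5 : ‖lam‖ ^ k ≤ ‖(δ k : ℂ) * lam ^ k‖ := by
        rw [h2]
        nlinarith [pow_nonneg (by linarith : (0:ℝ) ≤ ‖lam‖) k]
      linarith
    rcases Nat.lt_succ_iff_lt_or_eq.mp hi with h' | h'
    · refine ih ?_ i h'
      rw [Finset.sum_range_succ, hk] at h
      simpa using h
    · rw [h', hk]

open Matrix Finset in
private lemma aux_rel_zero {r : ℕ} (M : Matrix (Fin r) (Fin r) ℤ) (v : Fin r → ℤ)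
    (lam : ℂ) (hlam : 2 ≤ ‖lam‖) (x : Fin r → ℂ)
    (hxspan : x ∈ Submodule.span ℂ {y : Fin r → ℂ |
      ∃ i : ℕ, y = ((M.map ((↑·) : ℤ → ℂ)) ^ i).mulVec (fun j => (v j : ℂ))})
    (hx0 : x ≠ 0)
    (hxeig : (M.map ((↑·) : ℤ → ℂ)).mulVec x = lam • x)
    (k : ℕ) (δ : ℕ → ℤ) (hδ : ∀ i, |δ i| ≤ 1)
    (h : ∑ i ∈ Finset.range k, δ i • ((M ^ (i+1)) *ᵥ v) = 0) :
    ∀ i < k, δ i = 0 := by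
  set Mc : Matrix (Fin r) (Fin r) ℂ := M.map ((↑·) : ℤ → ℂ) with hMc
  set vc : Fin r → ℂ := fun j => (v j : ℂ) with hvc
  have hmp : ∀ n : ℕ, Mc ^ n = (M ^ n).map ((↑·) : ℤ → ℂ) := by
    intro n
    have := map_pow ((Int.castRingHom ℂ).mapMatrix) M n
    simpa [RingHom.mapMatrix_apply] using this.symm
  have hC : (∑ i ∈ Finset.range k, (δ i : ℂ) • (Mc ^ (i+1) *ᵥ vc)) = 0 := by
    funext j
    have hthis := congrFun h j
    simp only [Finset.sum_apply, Pi.smul_apply, Pi.zero_apply, smul_eq_mul] at hthis ⊢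
    have hcast : ∀ i : ℕ, (Mc ^ (i+1) *ᵥ vc) j = ((((M ^ (i+1)) *ᵥ v) j : ℤ) : ℂ) := by
      intro i
      rw [hmp]
      exact (RingHom.map_mulVec (Int.castRingHom ℂ) (M ^ (i+1)) v j).symm
    simp only [hcast]
    exact_mod_cast hthis
  have hx : ∑ i ∈ Finset.range k, (δ i : ℂ) • (Mc ^ (i+1) *ᵥ x) = 0 := by
    refine Submodule.span_induction
      (p := fun y _ => ∑ i ∈ Finset.range k, (δ i : ℂ) • (Mc ^ (i+1) *ᵥ y) = 0)
      ?_ ?_ ?_ ?_ hxspan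
    · rintro y ⟨n, rfl⟩
      have hcomm : ∀ i : ℕ, Mc ^ (i+1) *ᵥ (Mc ^ n *ᵥ vc) = Mc ^ n *ᵥ (Mc ^ (i+1) *ᵥ vc) := by
        intro i
        rw [mulVec_mulVec, mulVec_mulVec, ← pow_add, ← pow_add, Nat.add_comm]
      calc ∑ i ∈ Finset.range k, (δ i : ℂ) • (Mc ^ (i+1) *ᵥ (Mc ^ n *ᵥ vc))
          = (Mc ^ n).mulVecLin (∑ i ∈ Finset.range k, (δ i : ℂ) • (Mc ^ (i+1) *ᵥ vc)) := by
            rw [map_sum]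
            refine Finset.sum_congr rfl fun i _ => ?_
            rw [_root_.map_smul, mulVecLin_apply, hcomm]
        _ = 0 := by rw [hC, map_zero]
    · simp [Matrix.mulVec_zero]
    · intro y z _ _ hy hz
      simp only [mulVec_add, smul_add, Finset.sum_add_distrib, hy, hz, add_zero]
    · intro a y _ hy
      calc ∑ i ∈ Finset.range k, (δ i : ℂ) • (Mc ^ (i+1) *ᵥ (a • y))
          = a • ∑ i ∈ Finset.range k, (δ i : ℂ) • (Mc ^ (i+1) *ᵥ y) := by
            rw [Finset.smul_sum]
            refine Finset.sum_congr rfl fun i _ => ?_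
            rw [mulVec_smul]
            exact smul_comm _ _ _
        _ = 0 := by rw [hy, smul_zero]
  have hpow : ∀ n : ℕ, Mc ^ n *ᵥ x = lam ^ n • x := by
    intro n
    induction n with
    | zero => simp
    | succ n ihn =>
      rw [pow_succ', ← mulVec_mulVec, ihn, mulVec_smul, hxeig, smul_smul, ← pow_succ]
  have hsc : (∑ i ∈ Finset.range k, (δ i : ℂ) * lam ^ (i+1)) • x = 0 := by
    rw [← hx, Finset.sum_smul]
    refine Finset.sum_congr rfl fun i _ => ?_
    rw [hpow, smul_smul]
  have hscalar : ∑ i ∈ Finset.range k, (δ i : ℂ) * lam ^ (i+1) = 0 :=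
    (smul_eq_zero.mp hsc).resolve_right hx0
  have hlam0 : lam ≠ 0 := by
    intro h0
    rw [h0] at hlam
    simp at hlam
    linarith
  have hfinal : ∑ i ∈ Finset.range k, (δ i : ℂ) * lam ^ i = 0 := by
    have h6 : lam * ∑ i ∈ Finset.range k, (δ i : ℂ) * lam ^ i = 0 := by
      rw [Finset.mul_sum, ← hscalar]
      refine Finset.sum_congr rfl fun i _ => ?_
      ring
    exact (mul_eq_zero.mp h6).resolve_left hlam0
  exact aux_delta_zero lam hlam δ hδ k hfinal


open Matrix in
/-- an eigenvalue of modulus at least 2 on the complexified cyclic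
submodule generated by `v` yields a free semigroup on `t` and `t·v` in `ℤ^r ⋊_A ℤ`. -/
theorem free_semigroup_in_split_extension {r : ℕ} (A : GL (Fin r) ℤ) (v : Fin r → ℤ)
    (hEig : ∃ lam : ℂ, 2 ≤ ‖lam‖ ∧
      ∃ x : Fin r → ℂ,
        x ∈ Submodule.span ℂ {y : Fin r → ℂ |
          ∃ i : ℕ, y = (((A : Matrix (Fin r) (Fin r) ℤ).map ((↑·) : ℤ → ℂ)) ^ i).mulVec
            (fun j => (v j : ℂ))} ∧
        x ≠ 0 ∧
        ((A : Matrix (Fin r) (Fin r) ℤ).map ((↑·) : ℤ → ℂ)).mulVec x = lam • x) :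
    GeneratesFreeSemigroup
      (SemidirectProduct.inr (Multiplicative.ofAdd (1 : ℤ)) :
        Multiplicative (Fin r → ℤ) ⋊[glZAction A] Multiplicative ℤ)
      (SemidirectProduct.inr (Multiplicative.ofAdd (1 : ℤ)) *
        SemidirectProduct.inl (Multiplicative.ofAdd v)) := by
  obtain ⟨lam, hlam, x, hxspan, hx0, hxeig⟩ := hEig
  set M : Matrix (Fin r) (Fin r) ℤ := (A : Matrix (Fin r) (Fin r) ℤ) with hM
  set G := Multiplicative (Fin r → ℤ) ⋊[glZAction A] Multiplicative ℤ with hG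
  set t : G := SemidirectProduct.inr (Multiplicative.ofAdd (1 : ℤ)) with ht
  set f : Bool → G := fun b =>
    if b then t else t * SemidirectProduct.inl (Multiplicative.ofAdd v) with hf
  -- the coefficient function
  set c : Bool → ℤ := fun b => if b then 0 else 1 with hc
  -- abelianized image of a word
  set u : List Bool → (Fin r → ℤ) := fun L =>
    ∑ i ∈ Finset.range L.length, c (L.getD i true) • ((M ^ (i+1)) *ᵥ v) with hu
  -- action computation
  have hφ : ∀ w : Fin r → ℤ, glZAction A (Multiplicative.ofAdd (1 : ℤ))
      (Multiplicative.ofAdd w) = Multiplicative.ofAdd (M *ᵥ w) := by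
    intro w
    simp [glZAction, glAddAut, zpowersHom_apply]
    rfl
  -- commutation rule
  have htcomm : ∀ w : Fin r → ℤ,
      t * SemidirectProduct.inl (Multiplicative.ofAdd w)
        = SemidirectProduct.inl (Multiplicative.ofAdd (M *ᵥ w)) * t := by
    intro w
    have h1 := SemidirectProduct.inl_aut (φ := glZAction A)
      (Multiplicative.ofAdd (1 : ℤ)) (Multiplicative.ofAdd w)
    rw [hφ] at h1
    rw [h1, ht]
    rw [mul_assoc, ← _root_.map_mul, inv_mul_cancel]
    simp
  have hinl : ∀ a b : Fin r → ℤ,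
      (SemidirectProduct.inl (Multiplicative.ofAdd a) : G)
        * SemidirectProduct.inl (Multiplicative.ofAdd b)
        = SemidirectProduct.inl (Multiplicative.ofAdd (a + b)) := by
    intro a b
    rw [← _root_.map_mul]
    rfl
  have hinr : ∀ a b : ℤ,
      (SemidirectProduct.inr (Multiplicative.ofAdd a) : G)
        * SemidirectProduct.inr (Multiplicative.ofAdd b)
        = SemidirectProduct.inr (Multiplicative.ofAdd (a + b)) := by
    intro a b
    rw [← _root_.map_mul]
    rfl
  -- recursion for u
  have hu_cons : ∀ (b : Bool) (L : List Bool),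
      u (b :: L) = c b • (M *ᵥ v) + M *ᵥ (u L) := by
    intro b L
    have h2 : M *ᵥ (u L) = ∑ i ∈ Finset.range L.length,
        c (L.getD i true) • ((M ^ (i+2)) *ᵥ v) := by
      show M.mulVecLin _ = _
      rw [map_sum]
      refine Finset.sum_congr rfl fun i _ => ?_
      rw [_root_.map_smul, mulVecLin_apply, mulVec_mulVec, ← pow_succ']
    rw [hu]
    simp only [List.length_cons]
    rw [Finset.sum_range_succ']
    simp only [List.getD_cons_succ, List.getD_cons_zero]
    rw [h2, add_comm]
    norm_num
  -- product formula
  have hprod : ∀ L : List Bool, (L.map f).prod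
      = SemidirectProduct.inl (Multiplicative.ofAdd (u L))
        * SemidirectProduct.inr (Multiplicative.ofAdd (L.length : ℤ)) := by
    intro L
    induction L with
    | nil =>
      simp only [List.map_nil, List.prod_nil, List.length_nil, Nat.cast_zero]
      rw [hu]
      simp only [List.length_nil, Finset.range_zero, Finset.sum_empty]
      rw [ofAdd_zero, ofAdd_zero, _root_.map_one, _root_.map_one, one_mul]
    | cons b L ih =>
      rw [List.map_cons, List.prod_cons, ih, hu_cons]
      have e2 : (((b :: L).length : ℕ) : ℤ) = 1 + (L.length : ℤ) := by
        push_cast [List.length_cons]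
        ring
      cases b
      · have e1 : c false • (M *ᵥ v) + M *ᵥ u L = M *ᵥ (v + u L) := by
          simp [hc, mulVec_add]
        rw [e1, e2, ← hinr 1 L.length,
          show f false = t * SemidirectProduct.inl (Multiplicative.ofAdd v) from rfl]
        rw [← mul_assoc, mul_assoc t, hinl, htcomm, mul_assoc, ht]
      · have e1 : c true • (M *ᵥ v) + M *ᵥ u L = M *ᵥ u L := by
          simp [hc]
        rw [e1, e2, ← hinr 1 L.length, show f true = t from rfl,
          ← mul_assoc, htcomm, mul_assoc, ht]
  -- lift equals product over the word
  have hlift : ∀ (l : List Bool) (a : Bool),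
      (FreeSemigroup.lift f) ⟨a, l⟩ = ((a :: l).map f).prod := by
    intro l
    induction l with
    | nil =>
      intro a
      rw [show (⟨a, []⟩ : FreeSemigroup Bool) = FreeSemigroup.of a from rfl,
        FreeSemigroup.lift_of]
      simp
    | cons b l ihl =>
      intro a
      rw [show (⟨a, b :: l⟩ : FreeSemigroup Bool) = FreeSemigroup.of a * ⟨b, l⟩ from rfl,
        _root_.map_mul, FreeSemigroup.lift_of, ihl]
      simp [List.prod_cons]
  -- injectivity
  intro w1 w2 hw
  have hw' : (((w1.head :: w1.tail)).map f).prod = (((w2.head :: w2.tail)).map f).prod := by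
    rw [← hlift w1.tail w1.head, ← hlift w2.tail w2.head]
    exact hw
  set L1 : List Bool := w1.head :: w1.tail with hL1
  set L2 : List Bool := w2.head :: w2.tail with hL2
  rw [hprod, hprod] at hw'
  have hlen : L1.length = L2.length := by
    have h3 := congrArg (SemidirectProduct.rightHom) hw'
    simp only [_root_.map_mul, SemidirectProduct.rightHom_inl,
      SemidirectProduct.rightHom_inr, one_mul] at h3
    have h4 := congrArg Multiplicative.toAdd h3
    simp only [toAdd_ofAdd] at h4
    exact_mod_cast h4
  have hueq : u L1 = u L2 := by
    rw [hlen] at hw'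
    have h5 := mul_right_cancel hw'
    have h6 := SemidirectProduct.inl_injective h5
    exact congrArg Multiplicative.toAdd h6
  set δ : ℕ → ℤ := fun i => c (L1.getD i true) - c (L2.getD i true) with hδdef
  have hcb : ∀ b1 b2 : Bool, |(if b1 then (0:ℤ) else 1) - (if b2 then (0:ℤ) else 1)| ≤ 1 := by
    decide
  have hδb : ∀ i, |δ i| ≤ 1 := fun i => hcb _ _
  have hsum : ∑ i ∈ Finset.range L1.length, δ i • ((M ^ (i+1)) *ᵥ v) = 0 := by
    have h7 : ∑ i ∈ Finset.range L1.length, δ i • ((M ^ (i+1)) *ᵥ v) = u L1 - u L2 := by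
      rw [hu]
      simp only
      rw [← hlen, ← Finset.sum_sub_distrib]
      refine Finset.sum_congr rfl fun i _ => ?_
      simp only [hδdef]
      rw [sub_smul]
    rw [h7, hueq, sub_self]
  have hzero := aux_rel_zero M v lam hlam x hxspan hx0 hxeig L1.length δ hδb hsum
  have hL : L1 = L2 := by
    refine List.ext_getElem hlen fun i hi1 hi2 => ?_
    have hz := hzero i hi1
    have hz2 : c (L1.getD i true) = c (L2.getD i true) := by
      simp only [hδdef] at hz
      exact sub_eq_zero.mp hz
    have hcinj : ∀ b1 b2 : Bool,
        (if b1 then (0:ℤ) else 1) = (if b2 then (0:ℤ) else 1) → b1 = b2 := by decide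
    have hb := hcinj _ _ hz2
    rw [← List.getD_eq_getElem L1 true hi1, ← List.getD_eq_getElem L2 true hi2]
    exact hb
  rw [hL1, hL2] at hL
  injection hL with hh hT
  exact FreeSemigroup.ext hh hT
end

section
/- Let p be a monic polynomial with integer coefficients such that p(0) ≠ 0. Then all roots of p in ℂ have absolute value at most 1 if and only if all roots of p in ℂ are roots of unity. -/
/-- Kronecker: a monic integer polynomial not vanishing at 0 has all
complex roots of absolute value at most 1 iff all its complex roots are roots of unity. -/
theorem kronecker_roots_of_unity (p : Polynomial ℤ) (hmonic : p.Monic)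
    (h0 : p.eval 0 ≠ 0) :
    (∀ z : ℂ, Polynomial.aeval z p = 0 → ‖z‖ ≤ 1) ↔
    (∀ z : ℂ, Polynomial.aeval z p = 0 → ∃ n : ℕ, 1 ≤ n ∧ z ^ n = 1) := by
  open IntermediateField in
  constructor
  · intro h z hz
    -- z ≠ 0
    have hz0 : z ≠ 0 := by
      rintro rfl
      apply h0
      have h1 : ((p.coeff 0 : ℤ) : ℂ) = 0 := by
        simpa [Polynomial.aeval_def, Polynomial.eval₂_at_zero] using hz
      rw [← Polynomial.coeff_zero_eq_eval_zero]
      exact_mod_cast h1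
    -- z is an integral element
    have hzi : IsIntegral ℤ z := ⟨p, hmonic, hz⟩
    have hzq : IsIntegral ℚ z := hzi.tower_top
    -- the number field K = ℚ(z)
    let K : IntermediateField ℚ ℂ := ℚ⟮z⟯
    haveI : FiniteDimensional ℚ K := IntermediateField.adjoin.finiteDimensional hzq
    haveI : NumberField K := ⟨⟩
    set x : K := IntermediateField.AdjoinSimple.gen ℚ z with hxdef
    have hxz : (algebraMap K ℂ) x = z := rfl
    have hxeval : Polynomial.aeval x p = 0 := by
      have : (algebraMap K ℂ) (Polynomial.aeval x p) = 0 := by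
        rw [← Polynomial.aeval_algebraMap_apply, hxz, hz]
      exact (map_eq_zero_iff _ (algebraMap K ℂ).injective).mp this
    have hxi : IsIntegral ℤ x := ⟨p, hmonic, hxeval⟩
    -- all conjugates of x have norm ≤ 1
    have hconj : ∀ φ : K →+* ℂ, ‖φ x‖ ≤ 1 := by
      intro φ
      have hmem : φ x ∈ (minpoly ℚ x).rootSet ℂ := by
        rw [← NumberField.Embeddings.range_eval_eq_rootSet_minpoly K ℂ x]
        exact ⟨φ, rfl⟩
      have hdvd : minpoly ℚ x ∣ p.map (algebraMap ℤ ℚ) := by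
        apply minpoly.dvd
        rw [Polynomial.aeval_map_algebraMap]
        exact hxeval
      have hroot : Polynomial.aeval (φ x) (minpoly ℚ x) = 0 :=
        (Polynomial.mem_rootSet.mp hmem).2
      have : Polynomial.aeval (φ x) p = 0 := by
        obtain ⟨q, hq⟩ := hdvd
        have : Polynomial.aeval (φ x) (p.map (algebraMap ℤ ℚ)) = 0 := by
          rw [hq, map_mul, hroot, zero_mul]
        rwa [Polynomial.aeval_map_algebraMap] at this
      simpa using h (φ x) this
    -- pigeonhole: powers of x lie in a finite set
    have hmaps : Set.MapsTo (fun n : ℕ => x ^ n) Set.univ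
        {y : K | IsIntegral ℤ y ∧ ∀ φ : K →+* ℂ, ‖φ y‖ ≤ 1} := by
      intro n _
      refine ⟨hxi.pow n, fun φ => ?_⟩
      rw [map_pow, norm_pow]
      exact pow_le_one₀ (norm_nonneg _) (hconj φ)
    obtain ⟨a, -, b, -, habne, hab⟩ :=
      Set.Infinite.exists_ne_map_eq_of_mapsTo Set.infinite_univ hmaps
        (NumberField.Embeddings.finite_of_norm_le K ℂ (1 : ℝ))
    -- deduce z ^ (a - b) = 1
    have key : ∀ a b : ℕ, b < a → x ^ a = x ^ b → ∃ n : ℕ, 1 ≤ n ∧ z ^ n = 1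
    · intro a b hlt hab
      refine ⟨a - b, by omega, ?_⟩
      have hza : z ^ a = z ^ b := by
        have := congrArg (algebraMap K ℂ) hab
        simpa [map_pow, hxz] using this
      have : z ^ (a - b) * z ^ b = 1 * z ^ b := by
        rw [← pow_add, Nat.sub_add_cancel hlt.le, hza, one_mul]
      exact mul_right_cancel₀ (pow_ne_zero _ hz0) this
    rcases lt_or_gt_of_ne habne with hlt | hlt
    · exact key b a hlt hab.symm
    · exact key a b hlt hab
  · intro h z hz
    obtain ⟨n, hn, hzn⟩ := h z hz
    have : ‖z‖ ^ n = 1 := by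
      rw [← norm_pow, hzn, norm_one]
    have hn0 : n ≠ 0 := by omega
    exact (pow_le_one_iff_of_nonneg (norm_nonneg z) hn0).mp this.le
end
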